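/- Fix n ≥ q ≥ s. If f(n-1, q, s) = |B(n-1,q,s)| and f(n-1, q-s, s) = |B(n-1, q-s, s)|, then f(n, q, s) = |B(n,q,s)|. -/

import Mathlib

/-- The property `D(s,q)`: every `s` pairwise disjoint members have union of size `> q`. -/
def PropD {n : ℕ} (F : Finset (Finset (Fin n))) (s q : ℕ) : Prop :=
  ∀ 𝒜 : Finset (Finset (Fin n)), 𝒜 ⊆ F → 𝒜.card = s →
    (𝒜 : Set (Finset (Fin n))).Pairwise Disjoint → q < (𝒜.biUnion id).card

/-- `V` is the maximum size of a `D(s,q)` family on `[n]`, i.e. `f(n,q,s) = V`. -/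
def IsMaxD (n s q V : ℕ) : Prop :=
  (∀ F : Finset (Finset (Fin n)), PropD F s q → F.card ≤ V) ∧
  ∃ F : Finset (Finset (Fin n)), PropD F s q ∧ F.card = V

/-- `B(n, s(m+1)-l, s) = {F ⊆ [n] : |F| + |F ∩ [l-1]| ≥ t}` with `t = m+1`;
for `q - s = sm - l` the threshold is `t = m`. -/
def Bfam (n l t : ℕ) : Finset (Finset (Fin n)) :=
  Finset.univ.filter fun F => t ≤ F.card + (F.filter fun x => x.val < l - 1).card

open Finset

section Aux

variable {k : ℕ}

local notation "lst" => Fin.last k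

lemma propD_subset {n s q : ℕ} {F G : Finset (Finset (Fin n))} (hGF : G ⊆ F)
    (hF : PropD F s q) : PropD G s q :=
  fun 𝒜 h hc hd => hF 𝒜 (h.trans hGF) hc hd

lemma compress_eq {j : Fin (k+1)} (hj : j ≠ lst) {A : Finset (Fin (k+1))}
    (hA : lst ∈ A) (hjA : j ∉ A) :
    UV.compress {j} {lst} A = insert j (A.erase lst) := by
  rw [UV.compress_of_disjoint_of_le (by simpa using hjA) (by simpa using hA)]
  ext x
  simp only [sup_eq_union, mem_sdiff, mem_union, mem_singleton, mem_insert, mem_erase]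
  constructor
  · rintro ⟨hx1 | hx1, hx2⟩
    · exact Or.inr ⟨hx2, hx1⟩
    · exact Or.inl hx1
  · rintro (rfl | ⟨hx1, hx2⟩)
    · exact ⟨Or.inr rfl, hj⟩
    · exact ⟨Or.inl hx2, hx1⟩

lemma compress_eq_self {j : Fin (k+1)} {A : Finset (Fin (k+1))}
    (h : lst ∉ A ∨ j ∈ A) : UV.compress {j} {lst} A = A := by
  rw [UV.compress, if_neg]
  rintro ⟨h1, h2⟩
  rcases h with h | h
  · exact h (by simpa using h2)
  · exact (by simpa using h1 : j ∉ A) h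

lemma mem_comp_of_no_last {j : Fin (k+1)} {A : Finset (Fin (k+1))}
    {F : Finset (Finset (Fin (k+1)))} (hA : A ∈ F) (h : lst ∉ A) :
    A ∈ UV.compression {j} {lst} F := by
  rw [UV.mem_compression]
  exact Or.inl ⟨hA, by rwa [compress_eq_self (Or.inl h)]⟩

lemma mem_comp_last {j : Fin (k+1)} {A : Finset (Fin (k+1))}
    {F : Finset (Finset (Fin (k+1)))} (hj : j ≠ lst)
    (hA : A ∈ UV.compression {j} {lst} F) (h : lst ∈ A) :
    A ∈ F ∧ UV.compress {j} {lst} A ∈ F := by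
  rw [UV.mem_compression] at hA
  rcases hA with h1 | ⟨h1, B, hB, hBA⟩
  · exact h1
  · exfalso
    by_cases hc : lst ∈ B ∧ j ∉ B
    · rw [compress_eq hj hc.1 hc.2] at hBA
      subst hBA
      simp only [mem_insert, mem_erase] at h
      rcases h with h | h
      · exact hj h.symm
      · exact h.1 rfl
    · rw [compress_eq_self (by tauto)] at hBA
      exact h1 (hBA ▸ hB)

/-- Members of a compressed family that don't come from moving. -/
lemma mem_comp_cases {j : Fin (k+1)} {A : Finset (Fin (k+1))}
    {F : Finset (Finset (Fin (k+1)))} (hj : j ≠ lst)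
    (hA : A ∈ UV.compression {j} {lst} F) (hjA : j ∉ A) :
    A ∈ F ∧ UV.compress {j} {lst} A ∈ F := by
  rw [UV.mem_compression] at hA
  rcases hA with h1 | ⟨h1, B, hB, hBA⟩
  · exact h1
  · exfalso
    by_cases hc : lst ∈ B ∧ j ∉ B
    · rw [compress_eq hj hc.1 hc.2] at hBA
      subst hBA
      exact hjA (mem_insert_self _ _)
    · rw [compress_eq_self (by tauto)] at hBA
      exact h1 (hBA ▸ hB)


lemma propD_compression {s q : ℕ} {j : Fin (k+1)} (hj : j ≠ lst)
    {F : Finset (Finset (Fin (k+1)))} (hF : PropD F s q) :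
    PropD (UV.compression {j} {lst} F) s q := by
  intro 𝒜 h𝒜 hcard hdisj
  by_cases hall : ∀ A ∈ 𝒜, A ∈ F
  · exact hF 𝒜 hall hcard hdisj
  push_neg at hall
  obtain ⟨A₁, hA₁𝒜, hA₁F⟩ := hall
  -- A₁ is a moved set
  have hA₁c := h𝒜 hA₁𝒜
  rw [UV.mem_compression] at hA₁c
  rcases hA₁c with ⟨h1, _⟩ | ⟨_, B, hBF, hBA₁⟩
  · exact absurd h1 hA₁F
  have hBc : lst ∈ B ∧ j ∉ B := by
    by_contra hc
    rw [compress_eq_self (by tauto)] at hBA₁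
    exact hA₁F (hBA₁ ▸ hBF)
  rw [compress_eq hj hBc.1 hBc.2] at hBA₁
  have hjA₁ : j ∈ A₁ := hBA₁ ▸ mem_insert_self _ _
  have hlA₁ : lst ∉ A₁ := by
    rw [← hBA₁]
    simp only [mem_insert, mem_erase]
    rintro (h | h)
    · exact hj h.symm
    · exact h.1 rfl
  have hBeq : B = insert lst (A₁.erase j) := by
    rw [← hBA₁, erase_insert (by simp [hBc.2, mem_erase]), insert_erase hBc.1]
  -- facts about other members
  have hother : ∀ A ∈ 𝒜, A ≠ A₁ → j ∉ A := by
    intro A hA hne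
    have := hdisj hA hA₁𝒜 hne
    exact fun hjA => (Finset.disjoint_left.1 this) hjA hjA₁
  have hmemF : ∀ A ∈ 𝒜, A ≠ A₁ → A ∈ F ∧ (lst ∈ A → insert j (A.erase lst) ∈ F) := by
    intro A hA hne
    obtain ⟨h1, h2⟩ := mem_comp_cases hj (h𝒜 hA) (hother A hA hne)
    refine ⟨h1, fun hl => ?_⟩
    rwa [compress_eq hj hl (hother A hA hne)] at h2
  -- the replacement function
  set g : Finset (Fin (k+1)) → Finset (Fin (k+1)) := fun A =>
    if A = A₁ then insert lst (A₁.erase j)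
    else if lst ∈ A then insert j (A.erase lst) else A with hg
  have hgF : ∀ A ∈ 𝒜, g A ∈ F := by
    intro A hA
    by_cases h1 : A = A₁
    · simpa [hg, h1, ← hBeq] using hBF
    by_cases h2 : lst ∈ A
    · simpa [hg, h1, h2] using (hmemF A hA h1).2 h2
    · simpa [hg, h1, h2] using (hmemF A hA h1).1
  have hgcard : ∀ A ∈ 𝒜, (g A).card = A.card := by
    intro A hA
    by_cases h1 : A = A₁
    · subst h1
      simp only [hg, if_pos rfl]
      rw [card_insert_of_notMem (by simp [hlA₁, mem_erase]), card_erase_of_mem hjA₁]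
      have : 1 ≤ A.card := card_pos.2 ⟨j, hjA₁⟩
      omega
    by_cases h2 : lst ∈ A
    · simp only [hg, if_neg h1, if_pos h2]
      rw [card_insert_of_notMem (by simp [hother A hA h1, mem_erase]),
        card_erase_of_mem h2]
      have : 1 ≤ A.card := card_pos.2 ⟨lst, h2⟩
      omega
    · simp [hg, h1, h2]
  -- description of elements of g A
  have hkey : ∀ A ∈ 𝒜, ∀ x ∈ g A,
      (x ∈ A ∧ x ≠ j ∧ x ≠ lst) ∨ (x = lst ∧ A = A₁) ∨ (x = j ∧ A ≠ A₁ ∧ lst ∈ A) := by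
    intro A hA x hx
    by_cases h1 : A = A₁
    · subst h1
      simp only [hg, if_pos rfl, mem_insert, mem_erase] at hx
      rcases hx with rfl | ⟨hx1, hx2⟩
      · exact Or.inr (Or.inl ⟨rfl, rfl⟩)
      · exact Or.inl ⟨hx2, hx1, fun h => hlA₁ (h ▸ hx2)⟩
    by_cases h2 : lst ∈ A
    · simp only [hg, if_neg h1, if_pos h2, mem_insert, mem_erase] at hx
      rcases hx with rfl | ⟨hx1, hx2⟩
      · exact Or.inr (Or.inr ⟨rfl, h1, h2⟩)
      · exact Or.inl ⟨hx2, fun h => hother A hA h1 (h ▸ hx2), hx1⟩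
    · simp only [hg, if_neg h1, if_neg h2] at hx
      exact Or.inl ⟨hx, fun h => hother A hA h1 (h ▸ hx), fun h => h2 (h ▸ hx)⟩
  have hgdisj : ∀ A ∈ 𝒜, ∀ A' ∈ 𝒜, A ≠ A' → Disjoint (g A) (g A') := by
    intro A hA A' hA' hne
    rw [Finset.disjoint_left]
    intro x hx hx'
    have hAd : Disjoint A A' := hdisj hA hA' hne
    rcases hkey A hA x hx with ⟨m1, n1, l1⟩ | ⟨e1, a1⟩ | ⟨e1, a1, l1⟩ <;>
      rcases hkey A' hA' x hx' with ⟨m2, n2, l2⟩ | ⟨e2, a2⟩ | ⟨e2, a2, l2⟩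
    · exact (Finset.disjoint_left.1 hAd) m1 m2
    · exact l1 e2
    · exact n1 e2
    · exact l2 e1
    · exact hne (a1.trans a2.symm)
    · exact hj ((e2 ▸ e1) : j = lst)
    · exact n2 e1
    · exact hj ((e1 ▸ e2) : j = lst)
    · exact (Finset.disjoint_left.1 hAd) l1 l2
  have hginj : ∀ A ∈ 𝒜, ∀ A' ∈ 𝒜, g A = g A' → A = A' := by
    intro A hA A' hA' heq
    by_contra hne
    have hd := hgdisj A hA A' hA' hne
    rw [heq, disjoint_self] at hd
    have h0 : A'.card = 0 := by rw [← hgcard A' hA', hd]; simp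
    have h0' : A.card = 0 := by rw [← hgcard A hA, heq, hd]; simp
    rw [card_eq_zero] at h0 h0'
    exact hne (h0'.trans h0.symm)
  set ℬ := 𝒜.image g with hℬ
  have hℬF : ℬ ⊆ F := by
    intro X hX
    obtain ⟨A, hA, rfl⟩ := mem_image.1 hX
    exact hgF A hA
  have hℬcard : ℬ.card = s := by
    rw [hℬ, card_image_of_injOn (fun A hA A' hA' => hginj A hA A' hA'), hcard]
  have hℬdisj : (ℬ : Set (Finset (Fin (k+1)))).Pairwise Disjoint := by
    intro X hX Y hY hXY
    simp only [hℬ, coe_image, Set.mem_image, mem_coe] at hX hY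
    obtain ⟨A, hA, rfl⟩ := hX
    obtain ⟨A', hA', rfl⟩ := hY
    exact hgdisj A hA A' hA' (fun h => hXY (h ▸ rfl))
  have hq := hF ℬ hℬF hℬcard hℬdisj
  have hcards : (ℬ.biUnion id).card = (𝒜.biUnion id).card := by
    rw [hℬ, image_biUnion]
    have h2 : (𝒜.biUnion id).card = ∑ A ∈ 𝒜, A.card :=
      card_biUnion (fun A hA A' hA' h => hdisj hA hA' h)
    have h1 : (𝒜.biUnion fun a => id (g a)).card = ∑ A ∈ 𝒜, (g A).card :=
      card_biUnion (fun A hA A' hA' h => hgdisj A hA A' hA' h)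
    rw [h1, h2]
    exact Finset.sum_congr rfl hgcard
  rwa [hcards] at hq

def Sh (j : Fin (k+1)) (F : Finset (Finset (Fin (k+1)))) : Prop :=
  ∀ A ∈ F, lst ∈ A → j ∉ A → insert j (A.erase lst) ∈ F

lemma sh_self {j : Fin (k+1)} (hj : j ≠ lst) (F : Finset (Finset (Fin (k+1)))) :
    Sh j (UV.compression {j} {lst} F) := by
  intro A hA hl hjA
  obtain ⟨h1, h2⟩ := mem_comp_last hj hA hl
  rw [compress_eq hj hl hjA] at h2
  exact mem_comp_of_no_last h2 (by simp [mem_insert, mem_erase, (Ne.symm hj : lst ≠ j)])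

lemma sh_pres {j j' : Fin (k+1)} (hj : j ≠ lst) {F : Finset (Finset (Fin (k+1)))}
    (hF : Sh j' F) : Sh j' (UV.compression {j} {lst} F) := by
  intro A hA hl hj'A
  obtain ⟨h1, _⟩ := mem_comp_last hj hA hl
  have h3 := hF A h1 hl hj'A
  refine mem_comp_of_no_last h3 ?_
  simp only [mem_insert, mem_erase]
  rintro (h | h)
  · have : j' ≠ lst := fun he => hj'A (he ▸ hl)
    exact this h.symm
  · exact h.1 rfl

lemma exists_shifted {s q : ℕ} (F : Finset (Finset (Fin (k+1)))) (hF : PropD F s q) :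
    ∃ F' : Finset (Finset (Fin (k+1))), PropD F' s q ∧ F'.card = F.card ∧
      ∀ j : Fin (k+1), j ≠ lst → Sh j F' := by
  suffices h : ∀ (L : List (Fin (k+1))), (∀ j ∈ L, j ≠ lst) →
      ∃ F' : Finset (Finset (Fin (k+1))), PropD F' s q ∧ F'.card = F.card ∧
        ∀ j ∈ L, Sh j F' by
    obtain ⟨F', h1, h2, h3⟩ := h (Finset.univ.erase lst).toList
      (fun j hj => (Finset.mem_erase.1 (Finset.mem_toList.1 hj)).1)
    exact ⟨F', h1, h2, fun j hj => h3 j (Finset.mem_toList.2 (Finset.mem_erase.2 ⟨hj, mem_univ j⟩))⟩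
  intro L
  induction L with
  | nil => exact fun _ => ⟨F, hF, rfl, fun j hj => absurd hj List.not_mem_nil⟩
  | cons j L ih =>
    intro hL
    obtain ⟨F', h1, h2, h3⟩ := ih (fun j' hj' => hL j' (List.mem_cons_of_mem _ hj'))
    have hj : j ≠ lst := hL j List.mem_cons_self
    refine ⟨UV.compression {j} {lst} F', propD_compression hj h1, ?_, ?_⟩
    · rw [UV.card_compression, h2]
    · intro j' hj'
      rcases List.mem_cons.1 hj' with rfl | hj'
      · exact sh_self hj F'
      · exact sh_pres hj (h3 j' hj')

/-- transfer a family on `Fin (k+1)` all of whose members avoid `lst` down to `Fin k`. -/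
lemma card_le_of_avoid {s q V : ℕ}
    (h : ∀ G : Finset (Finset (Fin k)), PropD G s q → G.card ≤ V)
    (F : Finset (Finset (Fin (k+1)))) (hF : PropD F s q)
    (hav : ∀ A ∈ F, lst ∉ A) : F.card ≤ V := by
  classical
  set down : Finset (Fin (k+1)) → Finset (Fin k) :=
    fun A => A.preimage Fin.castSucc ((Fin.castSucc_injective k).injOn) with hdown
  have hmap : ∀ A ∈ F, (down A).map Fin.castSuccEmb = A := by
    intro A hA
    rw [Finset.map_eq_image]
    simp only [Fin.coe_castSuccEmb, hdown]
    rw [Finset.image_preimage]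
    refine Finset.filter_true_of_mem ?_
    intro x hx
    have hxl : x ≠ lst := fun h => hav A hA (h ▸ hx)
    exact ⟨x.castPred hxl, Fin.castSucc_castPred x hxl⟩
  set G := F.image down with hG
  have hcardG : G.card = F.card := by
    refine card_image_of_injOn ?_
    intro A hA A' hA' heq
    rw [← hmap A hA, ← hmap A' hA', heq]
  have hup : ∀ X ∈ G, X.map Fin.castSuccEmb ∈ F := by
    intro X hX
    obtain ⟨A, hA, rfl⟩ := mem_image.1 hX
    rw [hmap A hA]; exact hA
  have hPropG : PropD G s q := by
    intro 𝒜' hsub hcard hdisj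
    set 𝒜 := 𝒜'.image (fun X => X.map Fin.castSuccEmb) with h𝒜
    have hmapinj : Function.Injective (fun X : Finset (Fin k) => X.map Fin.castSuccEmb) :=
      fun X Y h => Finset.map_injective _ h
    have h1 : 𝒜 ⊆ F := by
      intro X hX
      obtain ⟨A, hA, rfl⟩ := mem_image.1 hX
      exact hup A (hsub hA)
    have h2 : 𝒜.card = s := by rw [h𝒜, card_image_of_injective _ hmapinj, hcard]
    have h3 : (𝒜 : Set (Finset (Fin (k+1)))).Pairwise Disjoint := by
      intro X hX Y hY hXY
      simp only [h𝒜, coe_image, Set.mem_image, mem_coe] at hX hY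
      obtain ⟨A, hA, rfl⟩ := hX
      obtain ⟨A', hA', rfl⟩ := hY
      rw [Finset.disjoint_map]
      exact hdisj hA hA' (fun h => hXY (h ▸ rfl))
    have h4 := hF 𝒜 h1 h2 h3
    have h5 : 𝒜.biUnion id = (𝒜'.biUnion id).map Fin.castSuccEmb := by
      ext x
      simp only [h𝒜, mem_biUnion, mem_image, mem_map, id]
      constructor
      · rintro ⟨X, ⟨A, hA, rfl⟩, hx⟩
        obtain ⟨y, hy, rfl⟩ := Finset.mem_map.1 hx
        exact ⟨y, ⟨A, hA, hy⟩, rfl⟩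
      · rintro ⟨y, ⟨A, hA, hy⟩, rfl⟩
        exact ⟨A.map Fin.castSuccEmb, ⟨A, hA, rfl⟩, Finset.mem_map_of_mem _ hy⟩
    rw [h5, Finset.card_map] at h4
    exact h4
  rw [← hcardG]
  exact h G hPropG

/-- the trace family `F(n)` satisfies `D(s, q-s)`. -/
lemma propD_top {s q : ℕ} (hs : 1 ≤ s) (hsq : s ≤ q) (hq : q ≤ k + 1)
    (F : Finset (Finset (Fin (k+1)))) (hF : PropD F s q)
    (hSh : ∀ j : Fin (k+1), j ≠ lst → ∀ A ∈ F, lst ∈ A → j ∉ A → insert j (A.erase lst) ∈ F) :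
    PropD ((F.filter (fun A => lst ∈ A)).image (fun A => A.erase lst)) s (q - s) := by
  classical
  intro 𝒜 hsub hcard hdisj
  set U := 𝒜.biUnion id with hU
  by_contra hcon
  push_neg at hcon
  have hUcard : U.card ≤ q - s := hcon
  have hmem : ∀ A ∈ 𝒜, lst ∉ A ∧ insert lst A ∈ F := by
    intro A hA
    obtain ⟨B, hB, rfl⟩ := mem_image.1 (hsub hA)
    rw [mem_filter] at hB
    exact ⟨notMem_erase _ _, by rw [insert_erase hB.2]; exact hB.1⟩
  have hlU : lst ∉ U := by
    simp only [hU, mem_biUnion, id]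
    rintro ⟨A, hA, hl⟩
    exact (hmem A hA).1 hl
  -- find s-1 fresh elements
  have hbig : s - 1 ≤ (Finset.univ \ insert lst U).card := by
    rw [card_sdiff_of_subset (subset_univ _), card_insert_of_notMem hlU]
    simp only [card_univ, Fintype.card_fin]
    omega
  obtain ⟨J, hJsub, hJcard⟩ := Finset.exists_subset_card_eq hbig
  have hJl : lst ∉ J := fun h => by simpa using (hJsub h)
  have hJU : ∀ x ∈ J, x ∉ U := by
    intro x hx
    have := hJsub hx
    simp only [mem_sdiff, mem_insert] at this
    exact fun h => this.2 (Or.inr h)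
  set T := insert lst J with hT
  have hTcard : T.card = s := by rw [hT, card_insert_of_notMem hJl, hJcard]; omega
  have hTU : ∀ x ∈ T, x ∉ U := by
    intro x hx
    rcases mem_insert.1 hx with rfl | hx
    · exact hlU
    · exact hJU x hx
  have hcards : Fintype.card 𝒜 = Fintype.card T := by
    simp only [Fintype.card_coe, hcard, hTcard]
  set φ := Fintype.equivOfCardEq hcards with hφ
  set f : {x // x ∈ 𝒜} → Finset (Fin (k+1)) := fun A => insert ((φ A : Fin (k+1))) A.val with hf
  have hfF : ∀ A, f A ∈ F := by
    intro A
    have hφT : (φ A : Fin (k+1)) ∈ T := (φ A).2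
    have hAU : A.val ⊆ U := fun x hx => mem_biUnion.2 ⟨A.val, A.2, hx⟩
    have hφA : (φ A : Fin (k+1)) ∉ A.val := fun h => hTU _ hφT (hAU h)
    rcases mem_insert.1 hφT with he | hJmem
    · rw [hf]; simp only []; rw [he]
      exact (hmem A.val A.2).2
    · have hne : (φ A : Fin (k+1)) ≠ lst := fun h => hJl (h ▸ hJmem)
      have h1 := hSh _ hne (insert lst A.val) (hmem A.val A.2).2 (mem_insert_self _ _)
        (by simp only [mem_insert]; rintro (h | h); exact hne h; exact hφA h)
      rwa [erase_insert (hmem A.val A.2).1] at h1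
  have hAU : ∀ A : {x // x ∈ 𝒜}, A.val ⊆ U := fun A x hx => mem_biUnion.2 ⟨A.val, A.2, hx⟩
  have hφU : ∀ A : {x // x ∈ 𝒜}, (φ A : Fin (k+1)) ∉ U := fun A => hTU _ (φ A).2
  have hfinj : Function.Injective f := by
    intro A A' heq
    have hsub1 : A.val ⊆ A'.val := by
      intro x hx
      have : x ∈ f A := mem_insert_of_mem hx
      rw [heq] at this
      rcases mem_insert.1 this with rfl | h
      · exact absurd (hAU A hx) (hφU A')
      · exact h
    have hsub2 : A'.val ⊆ A.val := by
      intro x hx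
      have : x ∈ f A' := mem_insert_of_mem hx
      rw [← heq] at this
      rcases mem_insert.1 this with rfl | h
      · exact absurd (hAU A' hx) (hφU A)
      · exact h
    exact Subtype.ext (Finset.Subset.antisymm hsub1 hsub2)
  set ℬ := 𝒜.attach.image f with hℬ
  have hℬcard : ℬ.card = s := by
    rw [hℬ, card_image_of_injective _ hfinj, card_attach, hcard]
  have hℬF : ℬ ⊆ F := by
    intro X hX
    obtain ⟨A, _, rfl⟩ := mem_image.1 hX
    exact hfF A
  have hℬdisj : (ℬ : Set (Finset (Fin (k+1)))).Pairwise Disjoint := by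
    intro X hX Y hY hXY
    simp only [hℬ, coe_image, Set.mem_image, mem_coe] at hX hY
    obtain ⟨A, _, rfl⟩ := hX
    obtain ⟨A', _, rfl⟩ := hY
    have hne : A ≠ A' := fun h => hXY (h ▸ rfl)
    rw [Finset.disjoint_left]
    intro x hx hx'
    have hx1 : x = (φ A : Fin (k+1)) ∨ x ∈ A.val := mem_insert.1 hx
    have hx2 : x = (φ A' : Fin (k+1)) ∨ x ∈ A'.val := mem_insert.1 hx'
    rcases hx1 with rfl | hxA
    · rcases hx2 with he | hxA'
      · exact hne (φ.injective (Subtype.ext he))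
      · exact hφU A (hAU A' hxA')
    · rcases hx2 with rfl | hxA'
      · exact hφU A' (hAU A hxA)
      · have hd := hdisj A.2 A'.2 (fun h => hne (Subtype.ext h))
        exact (Finset.disjoint_left.1 hd) hxA hxA'
  have hq2 := hF ℬ hℬF hℬcard hℬdisj
  have hsubU : ℬ.biUnion id ⊆ U ∪ T := by
    intro x hx
    obtain ⟨X, hX, hxX⟩ := mem_biUnion.1 hx
    obtain ⟨A, _, rfl⟩ := mem_image.1 hX
    simp only [id] at hxX
    rcases mem_insert.1 hxX with rfl | h
    · exact mem_union_right _ (φ A).2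
    · exact mem_union_left _ (hAU A h)
  have : (ℬ.biUnion id).card ≤ U.card + s := by
    calc (ℬ.biUnion id).card ≤ (U ∪ T).card := card_le_card hsubU
    _ ≤ U.card + T.card := card_union_le _ _
    _ = U.card + s := by rw [hTcard]
  omega

lemma mem_Bfam {n l t : ℕ} {A : Finset (Fin n)} :
    A ∈ Bfam n l t ↔ t ≤ A.card + (A.filter fun x => x.val < l - 1).card := by
  simp [Bfam]

lemma propD_Bfam {n s q m l : ℕ} (hl0 : 0 < l) (hlq : l ≤ s * (m + 1))
    (hq : q = s * (m + 1) - l) :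
    PropD (Bfam n l (m + 1)) s q := by
  classical
  intro 𝒜 hsub hcard hdisj
  have h1 : (𝒜.biUnion id).card = ∑ A ∈ 𝒜, A.card :=
    card_biUnion (fun A hA A' hA' h => hdisj hA hA' h)
  have h2 : ∑ A ∈ 𝒜, (A.filter fun x => x.val < l - 1).card ≤ l - 1 := by
    have hd : ∀ A ∈ 𝒜, ∀ A' ∈ 𝒜, A ≠ A' →
        Disjoint (A.filter fun x => x.val < l - 1) (A'.filter fun x => x.val < l - 1) :=
      fun A hA A' hA' h => (hdisj hA hA' h).mono (filter_subset _ _) (filter_subset _ _)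
    rw [← card_biUnion hd]
    calc (𝒜.biUnion fun A => A.filter fun x => x.val < l - 1).card
        ≤ (Finset.univ.filter fun x : Fin n => x.val < l - 1).card := by
          apply card_le_card
          intro x hx
          obtain ⟨A, _, hxA⟩ := mem_biUnion.1 hx
          exact mem_filter.2 ⟨mem_univ x, (mem_filter.1 hxA).2⟩
      _ ≤ l - 1 := by
          have h := Finset.card_le_card_of_injOn
            (s := Finset.univ.filter fun x : Fin n => x.val < l - 1)
            (t := Finset.range (l-1)) (fun x : Fin n => x.val)
            (fun x hx => Finset.mem_range.2 (mem_filter.1 hx).2)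
            (fun x _ y _ h => Fin.val_injective h)
          simpa using h
  have h3 : s * (m + 1) ≤ ∑ A ∈ 𝒜, (A.card + (A.filter fun x => x.val < l - 1).card) := by
    calc s * (m+1) = ∑ _A ∈ 𝒜, (m+1) := by rw [Finset.sum_const, hcard, smul_eq_mul, mul_comm]
    _ ≤ _ := Finset.sum_le_sum (fun A hA => mem_Bfam.1 (hsub hA))
  rw [Finset.sum_add_distrib] at h3
  omega

lemma bcard {k l m : ℕ} (hlk : l ≤ k + 1) :
    (Bfam (k+1) l (m+1)).card = (Bfam k l (m+1)).card + (Bfam k l m).card := by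
  classical
  have hsplit := card_filter_add_card_filter_not
    (s := Bfam (k+1) l (m+1)) (p := fun A => Fin.last k ∈ A)
  set e : Fin k ↪ Fin (k+1) := Fin.castSuccEmb with he
  have hlastval : ¬ ((Fin.last k).val < l - 1) := by
    simp only [Fin.val_last]
    omega
  have hfiltermap : ∀ A : Finset (Fin k),
      ((A.map e).filter fun x => x.val < l - 1).card = (A.filter fun x => x.val < l - 1).card := by
    intro A
    rw [Finset.filter_map, Finset.card_map]
    congr 1
  have hlastmap : ∀ A : Finset (Fin k), Fin.last k ∉ A.map e := by
    intro A h
    obtain ⟨y, _, hy⟩ := Finset.mem_map.1 h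
    exact absurd hy (Fin.castSucc_lt_last y).ne
  have hmapdown : ∀ B : Finset (Fin (k+1)), Fin.last k ∉ B →
      (B.preimage Fin.castSucc ((Fin.castSucc_injective k).injOn)).map e = B := by
    intro B hB
    rw [Finset.map_eq_image]
    simp only [he, Fin.coe_castSuccEmb]
    rw [Finset.image_preimage]
    refine Finset.filter_true_of_mem ?_
    intro x hx
    have hxl : x ≠ Fin.last k := fun h => hB (h ▸ hx)
    exact ⟨x.castPred hxl, Fin.castSucc_castPred x hxl⟩
  have hdownmap : ∀ A : Finset (Fin k),
      (A.map e).preimage Fin.castSucc ((Fin.castSucc_injective k).injOn) = A := by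
    intro A
    ext x
    rw [Finset.mem_preimage]
    exact Finset.mem_map' e
  -- part (i): sets not containing last
  have hpart1 : ((Bfam (k+1) l (m+1)).filter fun A => ¬ Fin.last k ∈ A).card
      = (Bfam k l (m+1)).card := by
    refine Finset.card_nbij'
      (fun B => B.preimage Fin.castSucc ((Fin.castSucc_injective k).injOn))
      (fun A => A.map e) ?_ ?_ ?_ ?_
    · intro B hB
      rw [mem_coe, mem_filter] at hB
      obtain ⟨hB1, hB2⟩ := hB
      rw [mem_coe, mem_Bfam]
      have heq := hmapdown B hB2
      have h1 : (B.preimage Fin.castSucc ((Fin.castSucc_injective k).injOn)).card = B.card := by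
        have hc := Finset.card_map (s := B.preimage Fin.castSucc ((Fin.castSucc_injective k).injOn)) e
        rw [heq] at hc
        exact hc.symm
      have h2 := hfiltermap (B.preimage Fin.castSucc ((Fin.castSucc_injective k).injOn))
      rw [heq] at h2
      rw [h1, ← h2]
      exact mem_Bfam.1 hB1
    · intro A hA
      rw [mem_coe, mem_filter, mem_Bfam, Finset.card_map, hfiltermap]
      exact ⟨mem_Bfam.1 hA, hlastmap A⟩
    · intro B hB
      exact hmapdown B (mem_filter.1 hB).2
    · intro A _
      exact hdownmap A
  -- part (ii): sets containing last
  have hpart2 : ((Bfam (k+1) l (m+1)).filter fun A => Fin.last k ∈ A).card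
      = (Bfam k l m).card := by
    refine Finset.card_nbij'
      (fun B => (B.erase (Fin.last k)).preimage Fin.castSucc ((Fin.castSucc_injective k).injOn))
      (fun A => insert (Fin.last k) (A.map e)) ?_ ?_ ?_ ?_
    · intro B hB
      rw [mem_coe, mem_filter] at hB
      obtain ⟨hB1, hB2⟩ := hB
      rw [mem_coe, mem_Bfam]
      have hne : Fin.last k ∉ B.erase (Fin.last k) := notMem_erase _ _
      have heq := hmapdown (B.erase (Fin.last k)) hne
      set A := (B.erase (Fin.last k)).preimage Fin.castSucc ((Fin.castSucc_injective k).injOn)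
        with hA
      have h1 : A.card = B.card - 1 := by
        have hc := Finset.card_map (s := A) e
        rw [heq, card_erase_of_mem hB2] at hc
        exact hc.symm
      have h2 : (A.filter fun x => x.val < l - 1).card
          = (B.filter fun x => x.val < l - 1).card := by
        have h3 := hfiltermap A
        rw [heq] at h3
        have h4 : (B.erase (Fin.last k)).filter (fun x => x.val < l - 1)
            = B.filter (fun x => x.val < l - 1) := by
          ext x
          simp only [mem_filter, mem_erase]
          constructor
          · rintro ⟨⟨_, h⟩, h2⟩; exact ⟨h, h2⟩
          · rintro ⟨h1', h2⟩; exact ⟨⟨fun hc => hlastval (hc ▸ h2), h1'⟩, h2⟩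
        rw [← h3, h4]
      have hBpos : 1 ≤ B.card := card_pos.2 ⟨_, hB2⟩
      have hB3 := mem_Bfam.1 hB1
      rw [h1, h2]
      omega
    · intro A hA
      rw [mem_coe, mem_filter, mem_Bfam]
      refine ⟨?_, mem_insert_self _ _⟩
      rw [card_insert_of_notMem (hlastmap A),
        Finset.filter_insert]
      rw [if_neg hlastval, hfiltermap, Finset.card_map]
      have := mem_Bfam.1 hA
      omega
    · intro B hB
      rw [mem_coe, mem_filter] at hB
      dsimp only
      rw [hmapdown (B.erase (Fin.last k)) (notMem_erase _ _), insert_erase hB.2]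
    · intro A _
      dsimp only
      rw [Finset.erase_insert (hlastmap A), hdownmap A]
  omega

end Aux

theorem stmt8 (n q s m l : ℕ) (hl0 : 0 < l) (hls : l ≤ s)
    (hq : q = s * (m + 1) - l) (hnq : q ≤ n) (hqs : s ≤ q)
    (h1 : IsMaxD (n - 1) s q ((Bfam (n - 1) l (m + 1)).card))
    (h2 : IsMaxD (n - 1) s (q - s) ((Bfam (n - 1) l m).card)) :
    IsMaxD n s q ((Bfam n l (m + 1)).card) := by
  classical
  have hn : n ≠ 0 := by omega
  obtain ⟨k, rfl⟩ := Nat.exists_eq_succ_of_ne_zero hn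
  have hnk : (k + 1 : ℕ) - 1 = k := rfl
  rw [hnk] at h1 h2
  have hlq : l ≤ s * (m + 1) := by
    calc l ≤ s := hls
    _ = s * 1 := (mul_one s).symm
    _ ≤ s * (m + 1) := Nat.mul_le_mul_left s (by omega)
  constructor
  · intro F hF
    obtain ⟨F', h1P, hcardeq, hSh⟩ := exists_shifted F hF
    set Fbar := F'.filter (fun A => ¬ Fin.last k ∈ A) with hFbar
    set Fin2 := F'.filter (fun A => Fin.last k ∈ A) with hFin2
    set Ftop := Fin2.image (fun A => A.erase (Fin.last k)) with hFtop
    have hsplit : Fin2.card + Fbar.card = F'.card :=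
      card_filter_add_card_filter_not _
    have hFbarle : Fbar.card ≤ (Bfam k l (m + 1)).card :=
      card_le_of_avoid h1.1 Fbar (propD_subset (filter_subset _ _) h1P)
        (fun A hA => (mem_filter.1 hA).2)
    have htopcard : Ftop.card = Fin2.card := by
      refine card_image_of_injOn ?_
      intro A hA B hB heq
      have hA2 := (mem_filter.1 hA).2
      have hB2 := (mem_filter.1 hB).2
      dsimp only at heq
      rw [← insert_erase hA2, ← insert_erase hB2, heq]
    have hPtop : PropD Ftop s (q - s) :=
      propD_top (by omega) hqs hnq F' h1P (fun j hj => hSh j hj)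
    have hFtople : Ftop.card ≤ (Bfam k l m).card :=
      card_le_of_avoid h2.1 Ftop hPtop
        (fun A hA => by
          obtain ⟨B, _, rfl⟩ := mem_image.1 hA
          exact notMem_erase _ _)
    rw [bcard (by omega)]
    omega
  · exact ⟨Bfam (k+1) l (m+1), propD_Bfam hl0 hlq hq, rfl⟩
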